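/- Let k ≥ 2 be an integer, λ > 0, and α ∈ ℝ. Let φ : ℝ → ℝ be a C² function with φ(t) = 1 for t ≤ 0, φ(t) = 0 for t ≥ 1, and 0 ≤ φ ≤ 1. For d ∈ ℤ and ρ > 0 set h_d(ρ) := φ(2^d·ρ − 1), so that h_d'(ρ) = 2^d·φ'(2^d·ρ − 1) and h_d''(ρ) = 2^{2d}·φ''(2^d·ρ − 1). Then there exists ζ₀ ∈ (0, 1/2), depending only on λ, k, |α| and the bounds on φ' and φ'', such that for every ζ ∈ [−ζ₀, 0), every d ∈ ℤ, and every ρ > 0, one has λ·ρ^{−2}·(1 + ζ·h_d(ρ)) − |ζ|·|h_d''(ρ) + ((k−1)/ρ)·h_d'(ρ)| − 2·|ζ|·|α|·|h_d'(ρ)|·ρ^{−1} > 0. -/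

import Mathlib

set_option maxHeartbeats 1200000


/-- Positivity estimate (2.21) in Step 3 of Proposition 2.2 (Basic Deformations): for the
dyadic cutoffs `h_d(ρ) = φ(2^d·ρ − 1)`, with `h_d'(ρ) = 2^d·φ'(2^d·ρ − 1)` and
`h_d''(ρ) = 2^{2d}·φ''(2^d·ρ − 1)`, there is a `ζ₀ ∈ (0, 1/2)` — independent of the
dyadic scale `d` — such that for all `ζ ∈ [−ζ₀, 0)`, all `d : ℤ` and all `ρ > 0` the
scalar curvature expression is positive. Here `ρ ^ (-2 : ℝ)` is the real power. -/
theorem dyadic_cutoff_positive (k : ℕ) (hk : 2 ≤ k) (lam : ℝ) (hlam : 0 < lam) (α : ℝ)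
    (φ : ℝ → ℝ) (hφ : ContDiff ℝ 2 φ)
    (hφ0 : ∀ t : ℝ, t ≤ 0 → φ t = 1) (hφ1 : ∀ t : ℝ, 1 ≤ t → φ t = 0)
    (hφrange : ∀ t : ℝ, 0 ≤ φ t ∧ φ t ≤ 1) :
    ∃ ζ₀ : ℝ, 0 < ζ₀ ∧ ζ₀ < 1 / 2 ∧
      ∀ ζ : ℝ, -ζ₀ ≤ ζ → ζ < 0 → ∀ d : ℤ, ∀ ρ : ℝ, 0 < ρ →
        0 < lam * ρ ^ (-2 : ℝ) * (1 + ζ * φ ((2 : ℝ) ^ d * ρ - 1)) -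
            |ζ| * |(2 : ℝ) ^ (2 * d) * deriv (deriv φ) ((2 : ℝ) ^ d * ρ - 1) +
                ((k : ℝ) - 1) / ρ * ((2 : ℝ) ^ d * deriv φ ((2 : ℝ) ^ d * ρ - 1))| -
            2 * |ζ| * |α| * |(2 : ℝ) ^ d * deriv φ ((2 : ℝ) ^ d * ρ - 1)| * ρ⁻¹ := by
  -- continuity of the derivatives
  have hφ1' : ContDiff ℝ 1 (deriv φ) := by
    have h2 : ContDiff ℝ (1 + 1 : ℕ) φ := by norm_num; exact hφ
    exact (contDiff_succ_iff_deriv.mp h2).2.2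
  have cont1 : Continuous (deriv φ) := hφ1'.continuous
  have cont2 : Continuous (deriv (deriv φ)) := hφ1'.continuous_deriv le_rfl
  -- derivatives vanish off (0,1)
  have hd1 : ∀ t : ℝ, t < 0 ∨ 1 < t → deriv φ t = 0 := by
    intro t ht
    rcases ht with ht | ht
    · have hev : φ =ᶠ[nhds t] fun _ => (1 : ℝ) := by
        filter_upwards [Iio_mem_nhds ht] with s hs using hφ0 s (le_of_lt hs)
      rw [hev.deriv_eq, deriv_const]
    · have hev : φ =ᶠ[nhds t] fun _ => (0 : ℝ) := by
        filter_upwards [Ioi_mem_nhds ht] with s hs using hφ1 s (le_of_lt hs)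
      rw [hev.deriv_eq, deriv_const]
  have hd2 : ∀ t : ℝ, t < 0 ∨ 1 < t → deriv (deriv φ) t = 0 := by
    intro t ht
    rcases ht with ht | ht
    · have hev : deriv φ =ᶠ[nhds t] fun _ => (0 : ℝ) := by
        filter_upwards [Iio_mem_nhds ht] with s hs using hd1 s (Or.inl hs)
      rw [hev.deriv_eq, deriv_const]
    · have hev : deriv φ =ᶠ[nhds t] fun _ => (0 : ℝ) := by
        filter_upwards [Ioi_mem_nhds ht] with s hs using hd1 s (Or.inr hs)
      rw [hev.deriv_eq, deriv_const]
  -- bound on the derivatives on [0,1]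
  obtain ⟨M1, hM1⟩ := isCompact_Icc.exists_bound_of_continuousOn
    (s := Set.Icc (0 : ℝ) 1) cont1.continuousOn
  obtain ⟨M2, hM2⟩ := isCompact_Icc.exists_bound_of_continuousOn
    (s := Set.Icc (0 : ℝ) 1) cont2.continuousOn
  set M : ℝ := max (max M1 M2) 0 with hMdef
  have hM0 : 0 ≤ M := le_max_right _ _
  have hb1 : ∀ t ∈ Set.Icc (0 : ℝ) 1, |deriv φ t| ≤ M := fun t ht =>
    (hM1 t ht).trans ((le_max_left M1 M2).trans (le_max_left _ _))
  have hb2 : ∀ t ∈ Set.Icc (0 : ℝ) 1, |deriv (deriv φ) t| ≤ M := fun t ht =>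
    (hM2 t ht).trans ((le_max_right M1 M2).trans (le_max_left _ _))
  -- the constant
  set C : ℝ := 4 * M + 2 * (k : ℝ) * M + 4 * |α| * M with hCdef
  have hC0 : 0 ≤ C := by positivity
  refine ⟨min (1 / 4) (lam / (2 * (C + 1))), ?_, ?_, ?_⟩
  · have : 0 < lam / (2 * (C + 1)) := by positivity
    exact lt_min (by norm_num) this
  · exact lt_of_le_of_lt (min_le_left _ _) (by norm_num)
  intro ζ hζ1 hζ2 d ρ hρ
  set x : ℝ := (2 : ℝ) ^ d with hxdef
  have hx : 0 < x := zpow_pos (by norm_num) d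
  set t : ℝ := x * ρ - 1 with htdef
  have hρ2pos : (0 : ℝ) < ρ ^ 2 := by positivity
  have hρ2 : ρ ^ (-2 : ℝ) = (ρ ^ 2)⁻¹ := by
    rw [show (-2 : ℝ) = ((-2 : ℤ) : ℝ) by norm_num, Real.rpow_intCast, zpow_neg,
      zpow_two, sq]
  have habs : |ζ| = -ζ := abs_of_neg hζ2
  have hmin1 := min_le_left (1 / 4 : ℝ) (lam / (2 * (C + 1)))
  have hmin2 := min_le_right (1 / 4 : ℝ) (lam / (2 * (C + 1)))
  have hζ4 : -ζ ≤ 1 / 4 := by linarith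
  have hζC : -ζ ≤ lam / (2 * (C + 1)) := by linarith
  have hφt := hφrange t
  have hfirst : (1 : ℝ) / 2 ≤ 1 + ζ * φ t := by
    have h1 : ζ * φ t ≥ ζ * 1 := mul_le_mul_of_nonpos_left hφt.2 (le_of_lt hζ2)
    linarith
  have hsq : 0 < (ρ ^ 2)⁻¹ := by positivity
  have h2pow : (2 : ℝ) ^ (2 * d) = x ^ 2 := by
    rw [hxdef, mul_comm, zpow_mul, zpow_two, sq]
  by_cases hin : 0 ≤ t ∧ t ≤ 1
  · -- inside the support: use the bounds
    have htm : t ∈ Set.Icc (0 : ℝ) 1 := ⟨hin.1, hin.2⟩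
    have hB1 : |deriv φ t| ≤ M := hb1 t htm
    have hB2 : |deriv (deriv φ) t| ≤ M := hb2 t htm
    have hxρ : x * ρ ≤ 2 := by nlinarith [hin.2]
    have hx2 : x ^ 2 ≤ 4 * (ρ ^ 2)⁻¹ := by
      have h : x ^ 2 * ρ ^ 2 ≤ 4 := by nlinarith
      have h' := (le_div_iff₀ hρ2pos).mpr h
      rwa [div_eq_mul_inv] at h'
    have hxinv : x * ρ⁻¹ ≤ 2 * (ρ ^ 2)⁻¹ := by
      have h : (x * ρ⁻¹) * ρ ^ 2 ≤ 2 := by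
        have he : (x * ρ⁻¹) * ρ ^ 2 = x * ρ := by field_simp
        rw [he]; exact hxρ
      have h' := (le_div_iff₀ hρ2pos).mpr h
      rwa [div_eq_mul_inv] at h'
    have hkpos : (0 : ℝ) ≤ (k : ℝ) - 1 := by
      have : (2 : ℝ) ≤ (k : ℝ) := by exact_mod_cast hk
      linarith
    have hA : |(2 : ℝ) ^ (2 * d) * deriv (deriv φ) t +
        ((k : ℝ) - 1) / ρ * (x * deriv φ t)| ≤ (4 * M + 2 * (k : ℝ) * M) * (ρ ^ 2)⁻¹ := by
      rw [h2pow]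
      calc |x ^ 2 * deriv (deriv φ) t + ((k : ℝ) - 1) / ρ * (x * deriv φ t)|
          ≤ |x ^ 2 * deriv (deriv φ) t| + |((k : ℝ) - 1) / ρ * (x * deriv φ t)| :=
            abs_add_le _ _
        _ = x ^ 2 * |deriv (deriv φ) t| +
              (((k : ℝ) - 1) * (x * ρ⁻¹)) * |deriv φ t| := by
            rw [abs_mul, abs_mul, abs_mul, abs_of_nonneg (by positivity : (0:ℝ) ≤ x ^ 2),
              abs_div, abs_of_nonneg hkpos, abs_of_pos hρ, abs_of_pos hx]
            field_simp
        _ ≤ (4 * (ρ ^ 2)⁻¹) * M + (((k : ℝ) - 1) * (2 * (ρ ^ 2)⁻¹)) * M := by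
            have h1 : x ^ 2 * |deriv (deriv φ) t| ≤ (4 * (ρ ^ 2)⁻¹) * M :=
              mul_le_mul hx2 hB2 (abs_nonneg _) (by positivity)
            have h2 : (((k : ℝ) - 1) * (x * ρ⁻¹)) * |deriv φ t| ≤
                (((k : ℝ) - 1) * (2 * (ρ ^ 2)⁻¹)) * M :=
              mul_le_mul (mul_le_mul_of_nonneg_left hxinv hkpos) hB1 (abs_nonneg _)
                (by positivity)
            linarith
        _ ≤ (4 * M + 2 * (k : ℝ) * M) * (ρ ^ 2)⁻¹ := by
            nlinarith [mul_nonneg hsq.le hM0]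
    have hB : |x * deriv φ t| * ρ⁻¹ ≤ 2 * M * (ρ ^ 2)⁻¹ := by
      rw [abs_mul, abs_of_pos hx]
      have h := mul_le_mul hxinv hB1 (abs_nonneg _)
        (by positivity : (0:ℝ) ≤ 2 * (ρ ^ 2)⁻¹)
      calc x * |deriv φ t| * ρ⁻¹ = x * ρ⁻¹ * |deriv φ t| := by ring
        _ ≤ 2 * (ρ ^ 2)⁻¹ * M := h
        _ = 2 * M * (ρ ^ 2)⁻¹ := by ring
    rw [hρ2, habs]
    have hz : (0 : ℝ) ≤ -ζ := by linarith
    have h1 := mul_le_mul_of_nonneg_left hA hz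
    have h2 := mul_le_mul_of_nonneg_left hB
      (by positivity : (0:ℝ) ≤ 2 * (-ζ) * |α|)
    have hsum : (-ζ) * |(2 : ℝ) ^ (2 * d) * deriv (deriv φ) t +
          ((k : ℝ) - 1) / ρ * (x * deriv φ t)| +
        2 * (-ζ) * |α| * |x * deriv φ t| * ρ⁻¹ ≤ (-ζ) * C * (ρ ^ 2)⁻¹ := by
      rw [hCdef]; nlinarith [h1, h2]
    have hCp : (0 : ℝ) < 2 * (C + 1) := by linarith
    have hml : (-ζ) * (2 * (C + 1)) ≤ lam := by
      have h := mul_le_mul_of_nonneg_right hζC (le_of_lt hCp)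
      rwa [div_mul_cancel₀ _ (ne_of_gt hCp)] at h
    have hzC : (-ζ) * C < lam / 2 := by nlinarith
    have hlow : (-ζ) * C * (ρ ^ 2)⁻¹ < lam * (ρ ^ 2)⁻¹ * (1 + ζ * φ t) := by
      calc (-ζ) * C * (ρ ^ 2)⁻¹ < (lam / 2) * (ρ ^ 2)⁻¹ :=
            mul_lt_mul_of_pos_right hzC hsq
        _ ≤ lam * (ρ ^ 2)⁻¹ * (1 + ζ * φ t) := by
            have h3 := mul_le_mul_of_nonneg_left hfirst
              (mul_nonneg hlam.le hsq.le : (0:ℝ) ≤ lam * (ρ ^ 2)⁻¹)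
            linarith
    linarith [hsum, hlow]
  · -- outside the support: the derivative terms vanish
    have hout : t < 0 ∨ 1 < t := by
      rcases not_and_or.mp hin with h | h
      · exact Or.inl (lt_of_not_ge h)
      · exact Or.inr (lt_of_not_ge h)
    rw [hd1 t hout, hd2 t hout]
    simp only [mul_zero, add_zero, abs_zero, zero_mul, sub_zero]
    rw [hρ2]
    have : (0:ℝ) < 1 + ζ * φ t := by linarith
    positivity
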